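/- For real x > 0, the factorial series ∑_{m=0}^∞ (-1)^m m!/(x)_{m+1} converges, whereas the corresponding power series ∑_{m=0}^∞ (-1)^m m!/x^{m+1} diverges for every finite x. -/

import Mathlib

open Filter

private lemma aux_succ (x : ℝ) (hx : 0 < x) (m : ℕ) :
    ((m + 1).factorial : ℝ) / (ascPochhammer ℝ (m + 2)).eval x
      = ((m.factorial : ℝ) / (ascPochhammer ℝ (m + 1)).eval x) * ((m + 1) / (x + (m + 1))) := by
  have hP : (0 : ℝ) < (ascPochhammer ℝ (m + 1)).eval x := ascPochhammer_pos _ _ hx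
  have hxm : (0 : ℝ) < x + (m + 1) := by positivity
  rw [ascPochhammer_succ_eval, Nat.factorial_succ]
  push_cast
  field_simp

private lemma aux_bound (x : ℝ) (hx : 0 < x) (m : ℕ) :
    (m.factorial : ℝ) / (ascPochhammer ℝ (m + 1)).eval x
      ≤ (1 / x) * Real.exp (-(x / (x + 1)) * ∑ k ∈ Finset.range m, (1 : ℝ) / (k + 1)) := by
  induction m with
  | zero =>
      simp [ascPochhammer_one]
  | succ m ih =>
      rw [aux_succ x hx m, Finset.sum_range_succ, mul_add, Real.exp_add, ← mul_assoc]
      have hP : (0 : ℝ) < (ascPochhammer ℝ (m + 1)).eval x := ascPochhammer_pos _ _ hx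
      have h1 : (0 : ℝ) ≤ (m.factorial : ℝ) / (ascPochhammer ℝ (m + 1)).eval x := by positivity
      have hxm : (0 : ℝ) < x + (m + 1) := by positivity
      have key : ((m : ℝ) + 1) / (x + (m + 1))
          ≤ Real.exp (-(x / (x + 1)) * ((1 : ℝ) / (m + 1))) := by
        have hle : ((m : ℝ) + 1) / (x + (m + 1)) ≤ 1 - x / (x + 1) * (1 / (m + 1)) := by
          rw [div_le_iff₀ hxm]
          have hx1 : (0 : ℝ) < x + 1 := by positivity
          have hm1 : (0 : ℝ) < (m : ℝ) + 1 := by positivity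
          field_simp
          nlinarith [mul_nonneg hx.le (Nat.cast_nonneg m), mul_nonneg (mul_nonneg hx.le hx.le) (Nat.cast_nonneg m)]
        refine hle.trans ?_
        have := Real.add_one_le_exp (-(x / (x + 1)) * ((1 : ℝ) / (m + 1)))
        linarith
      calc (m.factorial : ℝ) / (ascPochhammer ℝ (m + 1)).eval x * ((m + 1) / (x + (m + 1)))
          ≤ (1 / x * Real.exp (-(x / (x + 1)) * ∑ k ∈ Finset.range m, (1 : ℝ) / (k + 1)))
              * Real.exp (-(x / (x + 1)) * ((1 : ℝ) / (m + 1))) := by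
            apply mul_le_mul ih key (by positivity) (by positivity)
        _ = _ := by ring

/-- For x > 0, the factorial series ∑ (-1)^m m!/(x)_{m+1} converges, whereas the
    power series ∑ (-1)^m m!/x^{m+1} diverges for every (nonzero) finite x. -/
theorem factorial_series_converges_power_series_diverges :
    (∀ x : ℝ, 0 < x →
      ∃ L : ℝ,
        Tendsto
          (fun N => ∑ m ∈ Finset.range N,
            (-1 : ℝ) ^ m * (m.factorial : ℝ) / (ascPochhammer ℝ (m + 1)).eval x)
          atTop (nhds L)) ∧
    (∀ x : ℝ, x ≠ 0 →
      ¬ ∃ L : ℝ,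
        Tendsto
          (fun N => ∑ m ∈ Finset.range N,
            (-1 : ℝ) ^ m * (m.factorial : ℝ) / x ^ (m + 1))
          atTop (nhds L)) := by
  constructor
  · intro x hx
    set a : ℕ → ℝ := fun m => (m.factorial : ℝ) / (ascPochhammer ℝ (m + 1)).eval x with ha
    have hpos : ∀ m, 0 < (ascPochhammer ℝ (m + 1)).eval x := fun m => ascPochhammer_pos _ _ hx
    have hanti : Antitone a := by
      apply antitone_nat_of_succ_le
      intro m
      rw [ha]
      simp only
      rw [aux_succ x hx m]
      have h1 : (0 : ℝ) ≤ (m.factorial : ℝ) / (ascPochhammer ℝ (m + 1)).eval x := by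
        have := hpos m; positivity
      have h2 : ((m : ℝ) + 1) / (x + (m + 1)) ≤ 1 := by
        rw [div_le_one (by positivity)]; linarith
      calc (m.factorial : ℝ) / (ascPochhammer ℝ (m + 1)).eval x * ((m + 1) / (x + (m + 1)))
          ≤ (m.factorial : ℝ) / (ascPochhammer ℝ (m + 1)).eval x * 1 :=
            mul_le_mul_of_nonneg_left h2 h1
        _ = _ := mul_one _
    have h0 : Tendsto a atTop (nhds 0) := by
      have hub : Tendsto (fun m : ℕ => (1 / x) * Real.exp
          (-(x / (x + 1)) * ∑ k ∈ Finset.range m, (1 : ℝ) / (k + 1))) atTop (nhds 0) := by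
        have hH : Tendsto (fun m : ℕ => ∑ k ∈ Finset.range m, (1 : ℝ) / (k + 1)) atTop atTop := by
          exact_mod_cast Real.tendsto_sum_range_one_div_nat_succ_atTop
        have hc : -(x / (x + 1)) < 0 := by
          have : (0 : ℝ) < x / (x + 1) := by positivity
          linarith
        have hbot : Tendsto (fun m : ℕ =>
            -(x / (x + 1)) * ∑ k ∈ Finset.range m, (1 : ℝ) / (k + 1)) atTop atBot :=
          hH.const_mul_atTop_of_neg hc
        have := Real.tendsto_exp_atBot.comp hbot
        have := this.const_mul (1 / x)
        simpa using this
      refine tendsto_of_tendsto_of_tendsto_of_le_of_le tendsto_const_nhds hub ?_ ?_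
      · intro m
        have := hpos m
        positivity
      · intro m
        exact aux_bound x hx m
    obtain ⟨l, hl⟩ := hanti.tendsto_alternating_series_of_tendsto_zero h0
    refine ⟨l, hl.congr fun N => Finset.sum_congr rfl fun m _ => ?_⟩
    rw [mul_div_assoc]
  · rintro x hx ⟨L, hL⟩
    set f : ℕ → ℝ := fun m => (-1 : ℝ) ^ m * (m.factorial : ℝ) / x ^ (m + 1) with hf
    have hterm : Tendsto f atTop (nhds 0) := by
      have h1 : Tendsto (fun N => ∑ m ∈ Finset.range (N + 1), f m) atTop (nhds L) :=
        hL.comp (tendsto_add_atTop_nat 1)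
      have h2 := h1.sub hL
      simp only [Finset.sum_range_succ, add_sub_cancel_left] at h2
      simpa using h2
    have habs : Tendsto (fun m => ‖f m‖) atTop (nhds 0) := by
      simpa using hterm.norm
    have hv : Tendsto (fun m : ℕ => |x| ^ (m + 1) / (m.factorial : ℝ)) atTop (nhds 0) := by
      have := (FloorSemiring.tendsto_pow_div_factorial_atTop (|x|)).const_mul (|x|)
      simp only [mul_zero] at this
      refine this.congr fun m => ?_
      rw [pow_succ]
      ring
    have hone : ∀ m : ℕ, ‖f m‖ * (|x| ^ (m + 1) / (m.factorial : ℝ)) = 1 := by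
      intro m
      have hfac : (0 : ℝ) < (m.factorial : ℝ) := by exact_mod_cast m.factorial_pos
      have hxp : (0 : ℝ) < |x| ^ (m + 1) := pow_pos (abs_pos.mpr hx) _
      rw [hf]
      simp only
      rw [Real.norm_eq_abs, abs_div, abs_mul, abs_pow, abs_pow, abs_neg, abs_one, one_pow,
        one_mul, Nat.abs_cast]
      field_simp
    have := habs.mul hv
    rw [mul_zero] at this
    have h1 : Tendsto (fun _ : ℕ => (1 : ℝ)) atTop (nhds 0) := by
      refine this.congr fun m => (hone m)
    have := tendsto_nhds_unique h1 tendsto_const_nhds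
    norm_num at this
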